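/- Let G be a bipartite graph with an orientation G^e in which every cycle is oddly oriented. Then for every vertex subset S, the induced sub-orientation on the induced subgraph G[S] satisfies per(A(G[S])) = det(A(G^e[S])). -/

import Mathlib

open SimpleGraph

/-- An orientation of a simple graph `G`, encoded by its skew adjacency matrix entries:
`sign u v = 1` if the edge `uv` is directed from `u` to `v`, `-1` if it is directed
from `v` to `u`, and `0` if `uv` is not an edge. -/
structure SimpleGraph.Orientation {V : Type*} (G : SimpleGraph V) where
  sign : V → V → ℤ
  skew : ∀ u v, sign u v = - sign v u
  adj : ∀ u v, G.Adj u v → sign u v = 1 ∨ sign u v = -1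
  not_adj : ∀ u v, ¬ G.Adj u v → sign u v = 0

/-- A closed walk is oddly oriented if an odd number of its edges are directed in
agreement with the traversal direction of the walk. -/
def SimpleGraph.Orientation.OddlyOriented {V : Type*} {G : SimpleGraph V}
    (o : G.Orientation) {v : V} (c : G.Walk v v) : Prop :=
  Odd ((c.darts.filter (fun d => o.sign d.toProd.1 d.toProd.2 = 1)).length)


namespace StmtAux

variable {W : Type*} {H : SimpleGraph W}

/-- Walk along a function whose consecutive values are adjacent. -/
def natWalk (H : SimpleGraph W) (f : ℕ → W) (hf : ∀ i, H.Adj (f i) (f (i + 1))) :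
    (m j : ℕ) → H.Walk (f m) (f (m + j))
  | m, 0 => Walk.nil.copy rfl (by rw [Nat.add_zero])
  | m, j + 1 =>
    (Walk.cons (hf m) (natWalk H f hf (m + 1) j)).copy rfl (congrArg f (by omega))

lemma natWalk_support (f : ℕ → W) (hf : ∀ i, H.Adj (f i) (f (i + 1))) :
    ∀ m j, (natWalk H f hf m j).support = (List.range (j + 1)).map (fun i => f (m + i)) := by
  intro m j
  induction j generalizing m with
  | zero => simp [natWalk, List.range_succ]
  | succ j ih =>
    rw [natWalk, Walk.support_copy, Walk.support_cons, ih (m + 1)]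
    have : (List.range (j + 1 + 1)).map (fun i => f (m + i))
        = f m :: (List.range (j + 1)).map (fun i => f (m + 1 + i)) := by
      rw [List.range_succ_eq_map, List.map_cons, List.map_map]
      refine congrArg₂ _ (by rw [Nat.add_zero]) (List.map_congr_left ?_)
      intro i _
      exact congrArg f (by omega)
    rw [this]

lemma natWalk_darts (f : ℕ → W) (hf : ∀ i, H.Adj (f i) (f (i + 1))) :
    ∀ m j, (natWalk H f hf m j).darts.map (fun d => d.toProd)
      = (List.range j).map (fun i => (f (m + i), f (m + i + 1))) := by
  intro m j
  induction j generalizing m with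
  | zero => simp [natWalk]
  | succ j ih =>
    rw [natWalk, Walk.darts_copy, Walk.darts_cons, List.map_cons, ih (m + 1)]
    have : (List.range (j + 1)).map (fun i => (f (m + i), f (m + i + 1)))
        = (f m, f (m + 1)) :: (List.range j).map (fun i => (f (m + 1 + i), f (m + 1 + i + 1))) := by
      rw [List.range_succ_eq_map, List.map_cons, List.map_map]
      refine congrArg₂ _ (by rw [Nat.add_zero]) (List.map_congr_left ?_)
      intro i _
      refine Prod.ext (congrArg f (by omega)) (congrArg f (by omega))
    rw [this]

lemma natWalk_length (f : ℕ → W) (hf : ∀ i, H.Adj (f i) (f (i + 1))) (m j : ℕ) :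
    (natWalk H f hf m j).length = j := by
  have := congrArg List.length (natWalk_darts f hf m j)
  simpa using this


lemma coloring_walk_parity (C : H.Coloring (Fin 2)) :
    ∀ {u v : W} (w : H.Walk u v),
      (((C v : Fin 2) : ℕ) : ZMod 2) = (((C u : Fin 2) : ℕ) : ZMod 2) + w.length := by
  intro u v w
  induction w with
  | nil => simp
  | @cons u x v h p ih =>
    have hne : C u ≠ C x := C.valid h
    have key : ∀ a b : Fin 2, a ≠ b → (((b : Fin 2) : ℕ) : ZMod 2) = ((a : ℕ) : ZMod 2) + 1 := by
      decide
    rw [Walk.length_cons, ih, key _ _ hne]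
    push_cast
    ring

lemma even_length_of_closed (C : H.Coloring (Fin 2)) {v : W} (w : H.Walk v v) :
    Even w.length := by
  have h := coloring_walk_parity C w
  have h2 : ((w.length : ℕ) : ZMod 2) = 0 := by
    have := h.symm
    rwa [add_eq_left] at this
  rw [ZMod.natCast_eq_zero_iff] at h2
  exact even_iff_two_dvd.mpr h2

lemma countP_range (k : ℕ) (q : ℕ → Prop) [DecidablePred q] :
    (List.range k).countP (fun i => decide (q i)) = ((Finset.range k).filter q).card := by
  induction k with
  | zero => simp
  | succ k ih =>
    rw [List.range_succ, List.countP_append, Finset.range_add_one, Finset.filter_insert]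
    by_cases h : q k <;> simp [h, ih, Finset.card_insert_of_notMem, Finset.notMem_range_self]

/-- A product of ±1 values in terms of the count of +1's. -/
lemma prod_pm_one (k : ℕ) (s : ℕ → ℤ) (hs : ∀ i ∈ Finset.range k, s i = 1 ∨ s i = -1) :
    ∏ i ∈ Finset.range k, s i
      = (-1) ^ (k - ((Finset.range k).filter (fun i => s i = 1)).card) := by
  classical
  rw [← Finset.prod_filter_mul_prod_filter_not (Finset.range k) (fun i => s i = 1)]
  rw [Finset.prod_eq_one (fun i hi => (Finset.mem_filter.mp hi).2)]
  rw [one_mul]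
  have hneg : ∀ i ∈ (Finset.range k).filter (fun i => ¬ s i = 1), s i = -1 := by
    intro i hi
    rcases Finset.mem_filter.mp hi with ⟨hi1, hi2⟩
    rcases hs i hi1 with h | h
    · exact absurd h hi2
    · exact h
  rw [Finset.prod_congr rfl hneg, Finset.prod_const]
  congr 1
  have := Finset.card_filter_add_card_filter_not (s := Finset.range k)
    (p := fun i => s i = 1)
  simp only [Finset.card_range] at this
  omega

end StmtAux

namespace StmtAux

open Equiv Equiv.Perm Finset

variable {W : Type*} [Fintype W] [DecidableEq W] {H : SimpleGraph W}

lemma cycle_prod (hbip : H.Colorable 2) (p : H.Orientation)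
    (hodd : ∀ (v : W) (c : H.Walk v v), c.IsCycle → p.OddlyOriented c)
    (c : Perm W) (hc : c.IsCycle) (h : ∀ i ∈ c.support, H.Adj (c i) i) :
    ((Equiv.Perm.sign c : ℤˣ) : ℤ) * ∏ i ∈ c.support, p.sign (c i) i = 1 := by
  classical
  obtain ⟨a, ha0, -⟩ := id hc
  have ha : a ∈ c.support := Equiv.Perm.mem_support.mpr ha0
  set k := c.support.card with hkdef
  have hk2 : 2 ≤ k := hc.two_le_card_support
  have hcOn : c.IsCycleOn ↑c.support := by
    rw [Equiv.Perm.coe_support_eq_set_support]; exact hc.isCycleOn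
  have powEq : ∀ m n : ℕ, ((c ^ m) a = (c ^ n) a ↔ m ≡ n [MOD k]) := fun m n =>
    hcOn.pow_apply_eq_pow_apply ha
  set f : ℕ → W := fun j => (c ^ j) a with hfdef
  have hstep : ∀ j, c (f j) = f (j + 1) := by
    intro j
    simp only [hfdef, pow_succ' c j, Equiv.Perm.mul_apply]
  have hmem : ∀ j, f j ∈ c.support := fun j => Equiv.Perm.pow_apply_mem_support.mpr ha
  have hadj : ∀ j, H.Adj (f j) (f (j + 1)) := fun j => by
    rw [← hstep j]; exact (h _ (hmem j)).symm
  have hinj : ∀ {i j : ℕ}, i < k → j < k → f i = f j → i = j := by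
    intro i j hi hj hij
    have hm := (powEq i j).mp hij
    rwa [Nat.ModEq, Nat.mod_eq_of_lt hi, Nat.mod_eq_of_lt hj] at hm
  have hper : f k = f 0 := (powEq k 0).mpr (Nat.modEq_zero_iff_dvd.mpr dvd_rfl)
  -- the support is the orbit of `a`
  have hsupp : c.support = (Finset.range k).image f := by
    refine (Finset.eq_of_subset_of_card_le ?_ ?_).symm
    · intro x hx
      obtain ⟨j, _, rfl⟩ := Finset.mem_image.mp hx
      exact hmem j
    · rw [Finset.card_image_of_injOn, Finset.card_range]
      intro i hi j hj hij
      exact hinj (Finset.mem_range.mp (Finset.mem_coe.mp hi))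
        (Finset.mem_range.mp (Finset.mem_coe.mp hj)) hij
  have hprod1 : ∏ i ∈ c.support, p.sign (c i) i
      = ∏ j ∈ Finset.range k, p.sign (f (j + 1)) (f j) := by
    rw [hsupp, Finset.prod_image (fun i hi j hj hij =>
      hinj (Finset.mem_range.mp hi) (Finset.mem_range.mp hj) hij)]
    exact Finset.prod_congr rfl fun j _ => by rw [hstep j]
  set t := ((Finset.range k).filter (fun j => p.sign (f j) (f (j + 1)) = 1)).card with htdef
  have ht_le : t ≤ k := le_trans (Finset.card_filter_le _ _) (le_of_eq (Finset.card_range k))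
  have hprod2 : ∏ j ∈ Finset.range k, p.sign (f j) (f (j + 1)) = (-1) ^ (k - t) :=
    prod_pm_one k _ (fun j _ => p.adj _ _ (hadj j))
  have hflip : ∏ j ∈ Finset.range k, p.sign (f (j + 1)) (f j)
      = (-1 : ℤ) ^ k * (-1) ^ (k - t) := by
    calc ∏ j ∈ Finset.range k, p.sign (f (j + 1)) (f j)
        = ∏ j ∈ Finset.range k, (-1) * p.sign (f j) (f (j + 1)) :=
          Finset.prod_congr rfl fun j _ => by rw [p.skew (f (j+1)) (f j)]; ring
      _ = (-1) ^ k * ∏ j ∈ Finset.range k, p.sign (f j) (f (j + 1)) := by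
          rw [Finset.prod_mul_distrib, Finset.prod_const, Finset.card_range]
      _ = (-1 : ℤ) ^ k * (-1) ^ (k - t) := by rw [hprod2]
  -- the closed walk of length k shows that k is even
  have keven : Even k := by
    obtain ⟨C⟩ := hbip
    have hw := even_length_of_closed C
      ((natWalk H f hadj 0 k).copy rfl ((congrArg f (Nat.zero_add k)).trans hper))
    rwa [Walk.length_copy, natWalk_length] at hw
  -- t is odd
  have hoddt : Odd t := by
    rcases eq_or_lt_of_le hk2 with hk2' | hk3
    · -- the 2-cycle case: direct computation
      have hk : k = 2 := hk2'.symm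
      have h20 : f 2 = f 0 := by rw [← hk]; exact hper
      have hs1 : p.sign (f 1) (f 2) = - p.sign (f 0) (f 1) := by rw [h20, p.skew]
      have hrange : Finset.range k = {0, 1} := by rw [hk]; rfl
      have ht : t = 1 := by
        rw [htdef, hrange]
        rcases p.adj _ _ (hadj 0) with h0 | h0 <;>
          · rw [Finset.filter_insert, Finset.filter_singleton]
            simp [h0, hs1]
      rw [ht]; exact odd_one
    · -- k ≥ 3 : build an honest cycle and use `hodd`
      have hk1 : k - 1 + 1 = k := by omega
      set tw : H.Walk (f 1) (f 0) :=
        (natWalk H f hadj 1 (k - 1)).copy rfl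
          ((congrArg f (show 1 + (k - 1) = k by omega)).trans hper) with htw
      set cyc : H.Walk (f 0) (f 0) := Walk.cons (hadj 0) tw with hcycdef
      have htwdarts : tw.darts.map (fun d => d.toProd)
          = (List.range (k - 1)).map (fun i => (f (1 + i), f (1 + i + 1))) := by
        rw [htw, Walk.darts_copy, natWalk_darts]
      have hcyc : cyc.IsCycle := by
        rw [hcycdef, Walk.cons_isCycle_iff]
        constructor
        · rw [Walk.isPath_def, htw, Walk.support_copy, natWalk_support, hk1]
          refine List.Nodup.map_on ?_ List.nodup_range
          intro x hx y hy hxy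
          rw [List.mem_range] at hx hy
          have hm := (powEq (1 + x) (1 + y)).mp hxy
          rcases Nat.lt_or_ge (1 + x) k with h1 | h1 <;>
            rcases Nat.lt_or_ge (1 + y) k with h2 | h2
          · rw [Nat.ModEq, Nat.mod_eq_of_lt h1, Nat.mod_eq_of_lt h2] at hm; omega
          · have hy' : 1 + y = k := by omega
            rw [Nat.ModEq, Nat.mod_eq_of_lt h1, hy', Nat.mod_self] at hm; omega
          · have hx' : 1 + x = k := by omega
            rw [Nat.ModEq, hx', Nat.mod_self, Nat.mod_eq_of_lt h2] at hm; omega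
          · omega
        · intro hmem'
          have hE : tw.edges
              = (List.range (k - 1)).map (fun i => s(f (1 + i), f (1 + i + 1))) := by
            have e0 : tw.edges
                = (tw.darts.map (fun d => d.toProd)).map (fun x : W × W => Sym2.mk x.1 x.2) := by
              rw [List.map_map]; rfl
            rw [e0, htwdarts, List.map_map]; rfl
          rw [hE, List.mem_map] at hmem'
          obtain ⟨i, hi, hie⟩ := hmem'
          rw [List.mem_range] at hi
          simp only [Function.comp_apply, Sym2.eq_iff] at hie
          rcases hie with ⟨e1, e2⟩ | ⟨e1, e2⟩
          · have h1 : 1 + i = 0 := hinj (by omega) (by omega) e1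
            omega
          · have h1 : 1 + i = 0 + 1 := hinj (by omega) (by omega) e1
            have h2 : 1 + i + 1 = 0 := hinj (by omega) (by omega) e2
            omega
      have hoddc := hodd _ cyc hcyc
      rw [Orientation.OddlyOriented, ← List.countP_eq_length_filter] at hoddc
      have hcount : cyc.darts.countP (fun d => decide (p.sign d.toProd.1 d.toProd.2 = 1))
          = (List.range k).countP (fun i => decide (p.sign (f i) (f (i + 1)) = 1)) := by
        have e1 : cyc.darts.countP (fun d => decide (p.sign d.toProd.1 d.toProd.2 = 1))
            = (cyc.darts.map (fun d => d.toProd)).countP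
                (fun x => decide (p.sign x.1 x.2 = 1)) := by
          rw [List.countP_map]; rfl
        have e2 : cyc.darts.map (fun d => d.toProd)
            = (List.range k).map (fun i => (f i, f (i + 1))) := by
          rw [hcycdef, Walk.darts_cons, List.map_cons, htwdarts]
          rw [show k = (k - 1) + 1 by omega, List.range_succ_eq_map, List.map_cons,
            List.map_map]
          refine congrArg₂ _ rfl (List.map_congr_left ?_)
          intro i _
          refine Prod.ext (congrArg f (by omega)) (congrArg f (by omega))
        rw [e1, e2, List.countP_map]
        rfl
      rw [hcount, countP_range] at hoddc
      exact hoddc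
  -- put everything together
  have hsign : ((Equiv.Perm.sign c : ℤˣ) : ℤ) = -(-1) ^ k := by
    rw [hc.sign]
    push_cast
    ring
  have hkt : Odd (k - t) := by
    obtain ⟨e, he⟩ := keven
    obtain ⟨o, ho⟩ := hoddt
    exact ⟨e - o - 1, by omega⟩
  rw [hprod1, hflip, hsign, keven.neg_one_pow, hkt.neg_one_pow]
  ring


lemma key (hbip : H.Colorable 2) (p : H.Orientation)
    (hodd : ∀ (v : W) (c : H.Walk v v), c.IsCycle → p.OddlyOriented c)
    (σ : Perm W) (h : ∀ i ∈ σ.support, H.Adj (σ i) i) :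
    ((Equiv.Perm.sign σ : ℤˣ) : ℤ) * ∏ i ∈ σ.support, p.sign (σ i) i = 1 := by
  induction σ using Equiv.Perm.cycle_induction_on with
  | base_one => simp
  | base_cycles c hc => exact cycle_prod hbip p hodd c hc h
  | induction_disjoint σ τ hdisj hc ihσ ihτ =>
    have hsum : (σ * τ).support = σ.support ∪ τ.support := hdisj.support_mul
    have hds := hdisj.disjoint_support
    have hσap : ∀ i ∈ σ.support, (σ * τ) i = σ i := by
      intro i hi
      have : τ i = i := Equiv.Perm.notMem_support.mp (Finset.disjoint_left.mp hds hi)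
      rw [Equiv.Perm.mul_apply, this]
    have hτap : ∀ i ∈ τ.support, (σ * τ) i = τ i := by
      intro i hi
      have hti : τ i ∈ τ.support := Equiv.Perm.apply_mem_support.mpr hi
      have : σ (τ i) = τ i :=
        Equiv.Perm.notMem_support.mp (Finset.disjoint_right.mp hds hti)
      rw [Equiv.Perm.mul_apply, this]
    have hprod : ∏ i ∈ (σ * τ).support, p.sign ((σ * τ) i) i
        = (∏ i ∈ σ.support, p.sign (σ i) i) * ∏ i ∈ τ.support, p.sign (τ i) i := by
      rw [hsum, Finset.prod_union hds]
      congr 1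
      · exact Finset.prod_congr rfl fun i hi => by rw [hσap i hi]
      · exact Finset.prod_congr rfl fun i hi => by rw [hτap i hi]
    have hσh : ∀ i ∈ σ.support, H.Adj (σ i) i := by
      intro i hi
      have := h i (by rw [hsum]; exact Finset.mem_union_left _ hi)
      rwa [hσap i hi] at this
    have hτh : ∀ i ∈ τ.support, H.Adj (τ i) i := by
      intro i hi
      have := h i (by rw [hsum]; exact Finset.mem_union_right _ hi)
      rwa [hτap i hi] at this
    have e1 := ihσ hσh
    have e2 := ihτ hτh
    rw [hprod, map_mul]
    push_cast
    calc ((Equiv.Perm.sign σ : ℤˣ) : ℤ) * ((Equiv.Perm.sign τ : ℤˣ) : ℤ)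
          * ((∏ i ∈ σ.support, p.sign (σ i) i) * ∏ i ∈ τ.support, p.sign (τ i) i)
        = (((Equiv.Perm.sign σ : ℤˣ) : ℤ) * ∏ i ∈ σ.support, p.sign (σ i) i)
          * (((Equiv.Perm.sign τ : ℤˣ) : ℤ) * ∏ i ∈ τ.support, p.sign (τ i) i) := by ring
      _ = 1 := by rw [e1, e2, mul_one]

theorem main [DecidableRel H.Adj] (hbip : H.Colorable 2) (p : H.Orientation)
    (hodd : ∀ (v : W) (c : H.Walk v v), c.IsCycle → p.OddlyOriented c) :
    (H.adjMatrix ℤ).permanent = (Matrix.of p.sign).det := by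
  rw [Matrix.det_apply, Matrix.permanent]
  refine Finset.sum_congr rfl fun σ _ => ?_
  by_cases hσ : ∀ i, H.Adj (σ i) i
  · have hsupp : σ.support = Finset.univ := by
      refine Finset.eq_univ_of_forall fun i => Equiv.Perm.mem_support.mpr ?_
      exact (hσ i).ne
    have h1 : ∏ i, (H.adjMatrix ℤ) (σ i) i = 1 :=
      Finset.prod_eq_one fun i _ => by simp [hσ i]
    have h2 := key hbip p hodd σ (fun i _ => hσ i)
    rw [hsupp] at h2
    rw [h1, Units.smul_def, smul_eq_mul]
    exact h2.symm
  · push_neg at hσ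
    obtain ⟨i, hi⟩ := hσ
    have z1 : ∏ j, (H.adjMatrix ℤ) (σ j) j = 0 :=
      Finset.prod_eq_zero (Finset.mem_univ i) (by simp [hi])
    have z2 : ∏ j, (Matrix.of p.sign) (σ j) j = 0 :=
      Finset.prod_eq_zero (Finset.mem_univ i) (p.not_adj _ _ hi)
    rw [z1, z2, smul_zero]

end StmtAux

theorem stmt_9 {V : Type*} [Fintype V] [DecidableEq V] (G : SimpleGraph V)
    [DecidableRel G.Adj] (hbip : G.Colorable 2) (o : G.Orientation)
    (hodd : ∀ (v : V) (c : G.Walk v v), c.IsCycle → o.OddlyOriented c)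
    (S : Finset V) :
    Matrix.permanent
        ((G.adjMatrix ℤ).submatrix (Subtype.val : {x // x ∈ S} → V)
          (Subtype.val : {x // x ∈ S} → V))
      = ((Matrix.of o.sign).submatrix (Subtype.val : {x // x ∈ S} → V)
          (Subtype.val : {x // x ∈ S} → V)).det := by
  classical
  set H : SimpleGraph {x // x ∈ S} := G.comap (Subtype.val) with hH
  haveI : DecidableRel H.Adj := Classical.decRel _
  set p : H.Orientation :=
    { sign := fun u v => o.sign u.1 v.1
      skew := fun u v => o.skew u.1 v.1
      adj := fun u v h => o.adj u.1 v.1 h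
      not_adj := fun u v h => o.not_adj u.1 v.1 h } with hp
  have hbip' : H.Colorable 2 := by
    obtain ⟨C⟩ := hbip
    exact ⟨⟨fun v => C v.1, fun {u v} h => C.valid h⟩⟩
  have hodd' : ∀ (v : {x // x ∈ S}) (c : H.Walk v v), c.IsCycle → p.OddlyOriented c := by
    intro v c hc
    set emb : H ↪g G := SimpleGraph.Embedding.comap (Function.Embedding.subtype _) G with he
    have hc' : (c.map emb.toHom).IsCycle := hc.map (Subtype.val_injective)
    have := hodd _ (c.map emb.toHom) hc'
    rw [SimpleGraph.Orientation.OddlyOriented, ← List.countP_eq_length_filter,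
      SimpleGraph.Walk.darts_map, List.countP_map] at this
    rw [SimpleGraph.Orientation.OddlyOriented, ← List.countP_eq_length_filter]
    exact this
  have hadjM : (G.adjMatrix ℤ).submatrix (Subtype.val : {x // x ∈ S} → V)
      (Subtype.val : {x // x ∈ S} → V) = H.adjMatrix ℤ := by
    ext i j
    simp [Matrix.submatrix_apply, SimpleGraph.adjMatrix_apply, hH]
  have hsignM : (Matrix.of o.sign).submatrix (Subtype.val : {x // x ∈ S} → V)
      (Subtype.val : {x // x ∈ S} → V) = Matrix.of p.sign := rfl
  rw [hadjM, hsignM]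
  exact StmtAux.main hbip' p hodd'
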